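/- Every d-degenerate graph on n vertices has at most 2^d · n nonempty cliques (complete vertex subsets, not necessarily maximal). -/

import Mathlib

open SimpleGraph

/-- A `d`-degenerate graph: every nonempty subgraph has a vertex of degree at most `d`. -/
def IsDegenerate {V : Type*} (G : SimpleGraph V) (d : ℕ) : Prop :=
  ∀ H : G.Subgraph, H.verts.Nonempty → ∃ v ∈ H.verts, (H.neighborSet v).ncard ≤ d

lemma key {V : Type*} [Fintype V] (G : SimpleGraph V) (d : ℕ)
    (h : IsDegenerate G d) (A : Finset V) :
    {s : Finset V | s.Nonempty ∧ ↑s ⊆ (↑A : Set V) ∧ G.IsClique (s : Set V)}.ncard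
      ≤ 2 ^ d * A.card := by
  classical
  induction A using Finset.strongInduction with
  | _ A IH =>
  rcases A.eq_empty_or_nonempty with rfl | hA
  · have : {s : Finset V | s.Nonempty ∧ ↑s ⊆ ((∅ : Finset V) : Set V) ∧
        G.IsClique (s : Set V)} = ∅ := by
      ext s
      simp only [Set.mem_setOf_eq, Set.mem_empty_iff_false, iff_false]
      rintro ⟨⟨x, hx⟩, hsub, -⟩
      simpa using hsub hx
    rw [this, Set.ncard_empty]; exact Nat.zero_le _
  · -- build the induced subgraph on A
    set H : G.Subgraph :=
      { verts := ↑A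
        Adj := fun a b => G.Adj a b ∧ a ∈ A ∧ b ∈ A
        adj_sub := fun h => h.1
        edge_vert := fun h => h.2.1
        symm := ⟨fun a b h => ⟨h.1.symm, h.2.2, h.2.1⟩⟩ } with hH
    obtain ⟨v, hvA, hdeg⟩ := h H (by simpa [hH] using hA)
    have hvA' : v ∈ A := by simpa [hH] using hvA
    set N : Finset V := A.filter (fun w => G.Adj v w) with hN
    have hNeq : H.neighborSet v = ↑N := by
      ext w
      simp only [Subgraph.neighborSet, hH, hN, Set.mem_setOf_eq, Finset.coe_filter,
        Set.mem_setOf_eq]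
      constructor
      · rintro ⟨ha, -, hw⟩; exact ⟨hw, ha⟩
      · rintro ⟨hw, ha⟩; exact ⟨ha, hvA', hw⟩
    have hNcard : N.card ≤ d := by
      have := hdeg
      rwa [hNeq, Set.ncard_coe_finset] at this
    set S : Set (Finset V) :=
      {s : Finset V | s.Nonempty ∧ ↑s ⊆ (↑A : Set V) ∧ G.IsClique (s : Set V)} with hS
    set S1 : Set (Finset V) := {s ∈ S | v ∈ s} with hS1
    set S2 : Set (Finset V) := {s ∈ S | v ∉ s} with hS2
    have hsplit : S ⊆ S1 ∪ S2 := by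
      intro s hs
      by_cases hv : v ∈ s
      · exact Or.inl ⟨hs, hv⟩
      · exact Or.inr ⟨hs, hv⟩
    -- bound S2 by induction
    have hS2sub : S2 ⊆ {s : Finset V | s.Nonempty ∧ ↑s ⊆ ((A.erase v : Finset V) : Set V) ∧
        G.IsClique (s : Set V)} := by
      rintro s ⟨⟨hne, hsub, hcl⟩, hv⟩
      refine ⟨hne, ?_, hcl⟩
      intro x hx
      simp only [Finset.coe_erase, Set.mem_diff, Set.mem_singleton_iff]
      exact ⟨hsub hx, fun he => hv (by simpa [he] using hx)⟩
    have hS2card : S2.ncard ≤ 2 ^ d * (A.erase v).card :=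
      le_trans (Set.ncard_le_ncard hS2sub (Set.toFinite _))
        (IH _ (Finset.erase_ssubset hvA'))
    -- bound S1 : s ↦ s.erase v injective into powerset of N
    have hinj : Set.InjOn (fun s : Finset V => s.erase v) S1 := by
      rintro s ⟨-, hv1⟩ t ⟨-, hv2⟩ hst
      have hst' : s.erase v = t.erase v := hst
      have : insert v (s.erase v) = insert v (t.erase v) := by rw [hst']
      rwa [Finset.insert_erase hv1, Finset.insert_erase hv2] at this
    have himg : (fun s : Finset V => s.erase v) '' S1 ⊆ ↑N.powerset := by
      rintro t ⟨s, ⟨⟨-, hsub, hcl⟩, hv1⟩, rfl⟩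
      simp only [Finset.coe_powerset, Set.mem_preimage, Set.mem_powerset_iff,
        Finset.coe_subset]
      intro w hw
      have hws : w ∈ s := Finset.mem_of_mem_erase hw
      have hwv : w ≠ v := Finset.ne_of_mem_erase hw
      have hadj : G.Adj v w := hcl hv1 hws (Ne.symm hwv)
      simp only [hN, Finset.mem_filter]
      exact ⟨hsub hws, hadj⟩
    have hS1card : S1.ncard ≤ 2 ^ d := by
      calc S1.ncard = ((fun s : Finset V => s.erase v) '' S1).ncard :=
            (Set.ncard_image_of_injOn hinj).symm
        _ ≤ (↑N.powerset : Set (Finset V)).ncard :=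
            Set.ncard_le_ncard himg (Set.toFinite _)
        _ = N.powerset.card := Set.ncard_coe_finset _
        _ = 2 ^ N.card := Finset.card_powerset _
        _ ≤ 2 ^ d := Nat.pow_le_pow_right (by norm_num) hNcard
    have htotal : S.ncard ≤ S1.ncard + S2.ncard :=
      le_trans (Set.ncard_le_ncard hsplit (Set.toFinite _)) (Set.ncard_union_le _ _)
    have herase : (A.erase v).card = A.card - 1 := Finset.card_erase_of_mem hvA'
    have hApos : 1 ≤ A.card := Finset.card_pos.mpr hA
    calc S.ncard ≤ S1.ncard + S2.ncard := htotal
      _ ≤ 2 ^ d + 2 ^ d * (A.card - 1) := by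
          rw [herase] at hS2card; exact Nat.add_le_add hS1card hS2card
      _ = 2 ^ d * A.card := by
          obtain ⟨m, hm⟩ := Nat.exists_eq_add_of_le hApos
          rw [hm]
          have h1 : 1 + m - 1 = m := by omega
          rw [h1]; ring

/-- Every `d`-degenerate graph on `n` vertices has at most `2^d * n` nonempty cliques
(complete vertex subsets, not necessarily maximal). -/
theorem stmt7 {V : Type*} [Fintype V] (G : SimpleGraph V) (d : ℕ)
    (h : IsDegenerate G d) :
    {s : Finset V | s.Nonempty ∧ G.IsClique (s : Set V)}.ncard ≤ 2 ^ d * Fintype.card V := by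
  have := key G d h Finset.univ
  simpa using this
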